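/- If the prior density satisfies π(β, σ) ≤ max(C, C/σ) for all β ∈ ℝ^p, σ > 0 and the modified likelihood includes a factor σ^{|O|γ} with k := |O^c| − |O|γ > p + 1 non-outlier Student density terms, then the modified marginal m(y_{O^c}) = ∫∫ π(β,σ) σ^{|O|γ} ∏_{i∈O^c} (1/σ) f((y_i − x_i^Tβ)/σ) dσ dβ is finite, given that m is finite whenever there are more than p+1 Student density factors (properness of the Student posterior). -/

import Mathlib

open Real MeasureTheory

/-- Properness of the limiting posterior: if the prior density satisfies
`pr(β,σ) ≤ C max(1, 1/σ)`, the Student density `f` is bounded by `C`, and the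
Student posterior is proper whenever there are more than `p+1` density factors,
then the modified marginal
`∫∫ pr(β,σ) σ^{|O|γ} ∏_{i∈Oᶜ} (1/σ) f((yᵢ − xᵢ·β)/σ) dσ dβ`
is finite provided `|Oᶜ| − |O|γ > p + 1`. -/
theorem limiting_posterior_proper (n p γ : ℕ) (hγ : 1 ≤ γ)
    (cγ : ℝ) (hcγ : 0 < cγ)
    (f : ℝ → ℝ)
    (hf : ∀ z : ℝ, f z = cγ * (1 + z ^ 2 / (γ : ℝ)) ^ (-(((γ : ℝ) + 1)) / 2))
    (C : ℝ) (hC : 0 < C) (hfC : ∀ z : ℝ, f z ≤ C)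
    (pr : (Fin p → ℝ) → ℝ → ℝ) (hπ0 : ∀ β σ, 0 ≤ pr β σ)
    (hπ : ∀ (β : Fin p → ℝ) (σ : ℝ), 0 < σ → pr β σ ≤ max C (C / σ))
    (y : Fin n → ℝ) (x : Fin n → (Fin p → ℝ))
    -- properness of the Student posterior with any subcollection of more than
    -- p+1 observations (Proposition 2.1 of Gagnon et al. (2020))
    (hproper : ∀ S : Finset (Fin n), p + 1 < S.card →
      IntegrableOn
        (fun q : (Fin p → ℝ) × ℝ =>
          pr q.1 q.2 * ∏ i ∈ S, (1 / q.2) * f ((y i - ∑ j, x i j * q.1 j) / q.2))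
        (Set.univ ×ˢ Set.Ioi (0 : ℝ)))
    (O : Finset (Fin n))
    (hcard : (p : ℤ) + 1 < (Oᶜ.card : ℤ) - (O.card : ℤ) * (γ : ℤ)) :
    IntegrableOn
      (fun q : (Fin p → ℝ) × ℝ =>
        pr q.1 q.2 * q.2 ^ (O.card * γ) *
          ∏ i ∈ Oᶜ, (1 / q.2) * f ((y i - ∑ j, x i j * q.1 j) / q.2))
      (Set.univ ×ˢ Set.Ioi (0 : ℝ)) := by
  set k := O.card * γ with hk
  -- f is nonnegative and continuous
  have hf0 : ∀ z, 0 ≤ f z := by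
    intro z; rw [hf]; positivity
  have hfc : Continuous f := by
    have : f = fun z => cγ * (1 + z ^ 2 / (γ : ℝ)) ^ (-(((γ : ℝ) + 1)) / 2) := funext hf
    rw [this]
    refine continuous_const.mul ?_
    refine Continuous.rpow_const (by continuity) (fun z => Or.inl ?_)
    have : (0:ℝ) < 1 + z ^ 2 / (γ : ℝ) := by positivity
    exact ne_of_gt this
  -- cardinality bookkeeping
  have hcast : ((k : ℕ) : ℤ) = (O.card : ℤ) * (γ : ℤ) := by push_cast [hk]; ring
  rw [← hcast] at hcard
  have hknat : k ≤ Oᶜ.card := by omega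
  obtain ⟨S, hS, hScard⟩ := Finset.exists_subset_card_eq (s := Oᶜ) (n := Oᶜ.card - k) (Nat.sub_le _ _)
  have hSp : p + 1 < S.card := by omega
  have hsd : (Oᶜ \ S).card = k := by
    rw [Finset.card_sdiff_of_subset hS, hScard]; omega
  have hint := hproper S hSp
  -- measurability of the set
  have hsetm : MeasurableSet (Set.univ ×ˢ Set.Ioi (0:ℝ) : Set ((Fin p → ℝ) × ℝ)) :=
    MeasurableSet.univ.prod measurableSet_Ioi
  -- the key pointwise identity on σ > 0
  have key : ∀ q : (Fin p → ℝ) × ℝ, q ∈ Set.univ ×ˢ Set.Ioi (0:ℝ) →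
      pr q.1 q.2 * q.2 ^ k * ∏ i ∈ Oᶜ, (1 / q.2) * f ((y i - ∑ j, x i j * q.1 j) / q.2)
      = (∏ i ∈ Oᶜ \ S, f ((y i - ∑ j, x i j * q.1 j) / q.2)) *
        (pr q.1 q.2 * ∏ i ∈ S, (1 / q.2) * f ((y i - ∑ j, x i j * q.1 j) / q.2)) := by
    intro q hq
    have hσ : (0:ℝ) < q.2 := hq.2
    have hσ' : q.2 ≠ 0 := ne_of_gt hσ
    rw [← Finset.prod_sdiff hS]
    have h1 : q.2 ^ k = ∏ _i ∈ Oᶜ \ S, q.2 := by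
      rw [Finset.prod_const, hsd]
    have h2 : (∏ _i ∈ Oᶜ \ S, q.2) * ∏ i ∈ Oᶜ \ S, (1 / q.2) * f ((y i - ∑ j, x i j * q.1 j) / q.2)
        = ∏ i ∈ Oᶜ \ S, f ((y i - ∑ j, x i j * q.1 j) / q.2) := by
      rw [← Finset.prod_mul_distrib]
      refine Finset.prod_congr rfl fun i _ => ?_
      field_simp
    calc pr q.1 q.2 * q.2 ^ k *
          ((∏ i ∈ Oᶜ \ S, (1 / q.2) * f ((y i - ∑ j, x i j * q.1 j) / q.2)) *
           ∏ i ∈ S, (1 / q.2) * f ((y i - ∑ j, x i j * q.1 j) / q.2))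
        = ((q.2 ^ k) * ∏ i ∈ Oᶜ \ S, (1 / q.2) * f ((y i - ∑ j, x i j * q.1 j) / q.2)) *
          (pr q.1 q.2 * ∏ i ∈ S, (1 / q.2) * f ((y i - ∑ j, x i j * q.1 j) / q.2)) := by ring
      _ = _ := by rw [h1, h2]
  -- measurable outer factor
  have hFmeas : Measurable (fun q : (Fin p → ℝ) × ℝ =>
      ∏ i ∈ Oᶜ \ S, f ((y i - ∑ j, x i j * q.1 j) / q.2)) := by
    refine Finset.measurable_prod _ fun i _ => ?_
    refine hfc.measurable.comp ?_
    have h1 : Measurable fun q : (Fin p → ℝ) × ℝ => y i - ∑ j, x i j * q.1 j := by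
      refine measurable_const.sub ?_
      refine Finset.measurable_sum Finset.univ fun j _ => ?_
      exact (measurable_pi_apply j).comp measurable_fst |>.const_mul _
    exact h1.div measurable_snd
  -- apply mono'
  refine Integrable.mono'
    (g := fun q : (Fin p → ℝ) × ℝ => C ^ k *
      (pr q.1 q.2 * ∏ i ∈ S, (1 / q.2) * f ((y i - ∑ j, x i j * q.1 j) / q.2)))
    (hint.const_mul _) ?_ ?_
  · -- AEStronglyMeasurable of the integrand
    refine AEStronglyMeasurable.congr
      ((hFmeas.aestronglyMeasurable.mul hint.aestronglyMeasurable)) ?_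
    filter_upwards [ae_restrict_mem hsetm] with q hq
    exact (key q hq).symm
  · -- norm bound
    filter_upwards [ae_restrict_mem hsetm] with q hq
    have hσ : (0:ℝ) < q.2 := hq.2
    rw [key q hq]
    have hG0 : 0 ≤ pr q.1 q.2 * ∏ i ∈ S, (1 / q.2) * f ((y i - ∑ j, x i j * q.1 j) / q.2) := by
      refine mul_nonneg (hπ0 _ _) (Finset.prod_nonneg fun i _ => ?_)
      exact mul_nonneg (by positivity) (hf0 _)
    have hF0 : 0 ≤ ∏ i ∈ Oᶜ \ S, f ((y i - ∑ j, x i j * q.1 j) / q.2) :=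
      Finset.prod_nonneg fun i _ => hf0 _
    have hFle : (∏ i ∈ Oᶜ \ S, f ((y i - ∑ j, x i j * q.1 j) / q.2)) ≤ C ^ k := by
      calc (∏ i ∈ Oᶜ \ S, f ((y i - ∑ j, x i j * q.1 j) / q.2))
          ≤ ∏ _i ∈ Oᶜ \ S, C :=
            Finset.prod_le_prod (fun i _ => hf0 _) (fun i _ => hfC _)
        _ = C ^ k := by rw [Finset.prod_const, hsd]
    rw [Real.norm_eq_abs, abs_of_nonneg (mul_nonneg hF0 hG0)]
    exact mul_le_mul_of_nonneg_right hFle hG0
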